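/- Let D be a deterministic parity automaton with state set Q, transition δ, and coloring κ : Q → [1..k]. Define the FDFA F with leading automaton D (without acceptance) and, at each state q, the progress DFA with states Q × [1..k], initial state (q, κ(q)), transitions δ'((p,i),σ) = (δ(p,σ), min(i, κ(δ(p,σ)))), and accepting states {(p,i) : i odd}. Then for every pair (u,v) ∈ Σ* × Σ⁺, (u,v) is accepted by F if and only if u·v^ω is accepted by D, and F is saturated. -/

import Mathlib

open Classical

/-- `wpow v n` is the word `v` repeated `n` times. -/
def wpow {α : Type} (v : List α) : ℕ → List α
  | 0 => []
  | n + 1 => wpow v n ++ v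

/-- The ultimately periodic infinite word `u·v^ω` (meaningful when `v ≠ []`). -/
def upWord {α : Type} [Inhabited α] (u v : List α) : ℕ → α := fun n =>
  if n < u.length then u.getD n default
  else v.getD ((n - u.length) % v.length) default

/-- `l` is a prefix of the infinite word `w`. -/
def prefOf {α : Type} [Inhabited α] (l : List α) (w : ℕ → α) : Prop :=
  ∀ i < l.length, w i = l.getD i default

/-- A complete deterministic automaton (no acceptance condition). -/
structure DetAuto (α : Type) : Type 1 where
  State : Type
  [fin : Fintype State]
  init : State
  step : State → α → State

attribute [instance] DetAuto.fin

namespace DetAuto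

variable {α : Type}

/-- The state reached from `q` after reading the finite word `w`. -/
def run (A : DetAuto α) (q : A.State) (w : List α) : A.State := w.foldl A.step q

/-- The state reached from the initial state after reading `w`. -/
def eval (A : DetAuto α) (w : List α) : A.State := A.run A.init w

/-- The (infinite) run of `A` on an infinite word `w`. -/
def runSeq (A : DetAuto α) (w : ℕ → α) : ℕ → A.State
  | 0 => A.init
  | n + 1 => A.step (A.runSeq w n) (w n)

lemma exists_rep (A : DetAuto α) (u v : List α) :
    ∃ i, ∃ j, 1 ≤ j ∧ A.eval (u ++ wpow v i) = A.eval (u ++ wpow v (i + j)) := by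
  obtain ⟨a, b, hab, hfab⟩ :=
    Finite.exists_ne_map_eq_of_infinite (fun n : ℕ => A.eval (u ++ wpow v n))
  rcases Nat.lt_or_gt_of_ne hab with h | h
  · exact ⟨a, b - a, by omega, by rw [Nat.add_sub_cancel' h.le]; exact hfab⟩
  · exact ⟨b, a - b, by omega, by rw [Nat.add_sub_cancel' h.le]; exact hfab.symm⟩

/-- The least `i` in the normalization of `(u,v)` w.r.t. `A`. -/
noncomputable def normI (A : DetAuto α) (u v : List α) : ℕ :=
  Nat.find (A.exists_rep u v)

lemma normI_spec (A : DetAuto α) (u v : List α) :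
    ∃ j, 1 ≤ j ∧ A.eval (u ++ wpow v (A.normI u v))
      = A.eval (u ++ wpow v (A.normI u v + j)) :=
  Nat.find_spec (A.exists_rep u v)

/-- The least `j` in the normalization of `(u,v)` w.r.t. `A`. -/
noncomputable def normJ (A : DetAuto α) (u v : List α) : ℕ :=
  Nat.find (A.normI_spec u v)

/-- The normalization `(x, y) = (u·v^i, v^j)` of `(u,v)` w.r.t. `A`. -/
noncomputable def normalize (A : DetAuto α) (u v : List α) : List α × List α :=
  (u ++ wpow v (A.normI u v), wpow v (A.normJ u v))

/-- The product automaton. -/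
def prod (A B : DetAuto α) : DetAuto α where
  State := A.State × B.State
  init := (A.init, B.init)
  step := fun p σ => (A.step p.1 σ, B.step p.2 σ)

end DetAuto

/-- A family of DFAs: a leading automaton and a progress DFA for each of its states. -/
structure FDFA (α : Type) : Type 1 where
  leading : DetAuto α
  pState : leading.State → Type
  [pFin : ∀ q, Fintype (pState q)]
  pInit : ∀ q, pState q
  pStep : ∀ q, pState q → α → pState q
  pAcc : ∀ q, Set (pState q)

attribute [instance] FDFA.pFin

namespace FDFA

variable {α : Type}

/-- The progress DFA at state `q` accepts the finite word `y`. -/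
def progAccept (F : FDFA α) (q : F.leading.State) (y : List α) : Prop :=
  y.foldl (F.pStep q) (F.pInit q) ∈ F.pAcc q

/-- `F` accepts the pair `(u, v)`: with `(x,y)` the normalization of `(u,v)` w.r.t.
the leading automaton, the progress DFA at the state reached on `x` accepts `y`. -/
noncomputable def Accept (F : FDFA α) (u v : List α) : Prop :=
  F.progAccept (F.leading.eval (F.leading.normalize u v).1) (F.leading.normalize u v).2

/-- `F` is saturated: acceptance of `(u,v)` depends only on the infinite word `u·v^ω`. -/
def Saturated [Inhabited α] (F : FDFA α) : Prop :=
  ∀ u v u' v' : List α, v ≠ [] → v' ≠ [] → upWord u v = upWord u' v' →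
    (F.Accept u v ↔ F.Accept u' v')

/-- The complement FDFA: same structure, complemented accepting states. -/
def compl (F : FDFA α) : FDFA α :=
  { F with pAcc := fun q => (F.pAcc q)ᶜ }

end FDFA

/-- Parity acceptance: the minimal color visited infinitely often along the run is odd. -/
def parityAccepts {α : Type} (A : DetAuto α) (κ : A.State → ℕ) (w : ℕ → α) : Prop :=
  Odd (sInf {c | {n | κ (A.runSeq w n) = c}.Infinite})

/-- The FDFA associated with a deterministic parity automaton with colors in `[1..k]`:
the progress DFA at `q` has states `Q × [1..k]` (colors encoded in `Fin (k+1)`), starts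
at `(q, κ q)`, tracks the minimal color seen, and accepts when that color is odd. -/
noncomputable def dpaToFdfa {α : Type} (A : DetAuto α) (k : ℕ) (κ : A.State → ℕ)
    (hκ : ∀ q, κ q ≤ k) : FDFA α where
  leading := A
  pState := fun _ => A.State × Fin (k + 1)
  pInit := fun q => (q, ⟨κ q, Nat.lt_succ_of_le (hκ q)⟩)
  pStep := fun _ p σ =>
    (A.step p.1 σ, ⟨min p.2.val (κ (A.step p.1 σ)),
      lt_of_le_of_lt (min_le_left _ _) p.2.isLt⟩)
  pAcc := fun _ => {p | Odd p.2.val}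

/-! ### Auxiliary machinery for the proof -/

section AuxProof

variable {α : Type}

private lemma wpow_length (v : List α) (n : ℕ) : (wpow v n).length = n * v.length := by
  induction n with
  | zero => simp [wpow]
  | succ n ih => simp [wpow, ih, Nat.succ_mul]

private lemma wpow_add (v : List α) (m n : ℕ) : wpow v (m + n) = wpow v m ++ wpow v n := by
  induction n with
  | zero => simp [wpow]
  | succ n ih =>
      have h : m + (n + 1) = (m + n) + 1 := rfl
      rw [h, wpow, ih, wpow, List.append_assoc]

private lemma wpow_getD (v : List α) (hv : 0 < v.length) (d : α) :
    ∀ (n m : ℕ), m < n * v.length → (wpow v n).getD m d = v.getD (m % v.length) d := by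
  intro n
  induction n with
  | zero => intro m hm; omega
  | succ n ih =>
      intro m hm
      rcases lt_or_ge m (n * v.length) with h | h
      · rw [wpow, List.getD_append _ _ _ _ (by rw [wpow_length]; exact h)]
        exact ih m h
      · rw [wpow, List.getD_append_right _ _ _ _ (by rw [wpow_length]; exact h),
          wpow_length]
        congr 1
        have h1 : m - n * v.length < v.length := by
          have hs : (n + 1) * v.length = n * v.length + v.length := by ring
          omega
        have h2 : m = (m - n * v.length) + n * v.length := by omega
        rw [h2, Nat.add_mul_mod_self_right, Nat.mod_eq_of_lt h1]
        omega

private lemma upWord_pref [Inhabited α] (u v : List α) (hv : v ≠ []) (n : ℕ) :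
    prefOf (u ++ wpow v n) (upWord u v) := by
  have hv' : 0 < v.length := List.length_pos_iff.mpr hv
  intro i hi
  rw [List.length_append, wpow_length] at hi
  unfold upWord
  rcases lt_or_ge i u.length with h | h
  · rw [if_pos h, List.getD_append _ _ _ _ h]
  · rw [if_neg (by omega), List.getD_append_right _ _ _ _ h,
      wpow_getD v hv' _ n _ (by omega)]

private lemma runSeq_take (A : DetAuto α) [Inhabited α] (w : ℕ → α) (l : List α)
    (h : prefOf l w) : ∀ n, n ≤ l.length → A.runSeq w n = A.run A.init (l.take n) := by
  intro n
  induction n with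
  | zero => intro _; simp [DetAuto.runSeq, DetAuto.run]
  | succ n ih =>
      intro hn
      have hlt : n < l.length := by omega
      have h1 : A.runSeq w (n + 1) = A.step (A.runSeq w n) (w n) := rfl
      have h2 : l.take (n + 1) = l.take n ++ [l.get ⟨n, hlt⟩] := by
        rw [List.take_succ]
        simp [List.getElem?_eq_getElem hlt]
      rw [h1, ih (by omega), h2]
      simp only [DetAuto.run]
      rw [List.foldl_append]
      simp only [List.foldl_cons, List.foldl_nil]
      congr 1
      rw [h n hlt]
      simp [List.getD_eq_getElem l default hlt, List.getElem?_eq_getElem hlt]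

/-- Minimal color of the states visited when reading `z` from `p` (including `p`). -/
private def mcol (A : DetAuto α) (κ : A.State → ℕ) : A.State → List α → ℕ
  | p, [] => κ p
  | p, a :: t => min (κ p) (mcol A κ (A.step p a) t)

private lemma mcol_exists (A : DetAuto α) (κ : A.State → ℕ) :
    ∀ (z : List α) (p : A.State), ∃ m ≤ z.length, mcol A κ p z = κ (A.run p (z.take m)) := by
  intro z
  induction z with
  | nil => intro p; exact ⟨0, le_refl _, rfl⟩
  | cons a t ih =>
      intro p
      rcases le_total (κ p) (mcol A κ (A.step p a) t) with h | h
      · exact ⟨0, by simp, by simp [mcol, min_eq_left h, DetAuto.run]⟩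
      · obtain ⟨m, hm, hval⟩ := ih (A.step p a)
        refine ⟨m + 1, by simpa using hm, ?_⟩
        simp only [mcol, min_eq_right h, List.take_succ_cons]
        rw [hval]
        rfl

private lemma mcol_le (A : DetAuto α) (κ : A.State → ℕ) :
    ∀ (z : List α) (p : A.State) (m : ℕ), m ≤ z.length →
      mcol A κ p z ≤ κ (A.run p (z.take m)) := by
  intro z
  induction z with
  | nil =>
      intro p m hm
      have hm0 : m = 0 := by simpa using hm
      subst hm0; simp [mcol, DetAuto.run]
  | cons a t ih =>
      intro p m hm
      match m with
      | 0 => simpa [DetAuto.run, mcol] using min_le_left _ _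
      | m + 1 =>
          have := ih (A.step p a) m (by simpa using hm)
          calc mcol A κ p (a :: t) ≤ mcol A κ (A.step p a) t := min_le_right _ _
            _ ≤ _ := this

end AuxProof

/-- The explicit progress step function of `dpaToFdfa`. -/
private def pst {α : Type} (A : DetAuto α) (k : ℕ) (κ : A.State → ℕ) :
    A.State × Fin (k + 1) → α → A.State × Fin (k + 1) := fun p σ =>
  (A.step p.1 σ, ⟨min p.2.val (κ (A.step p.1 σ)),
    lt_of_le_of_lt (min_le_left _ _) p.2.isLt⟩)

private lemma foldl_snd {α : Type} (A : DetAuto α) (k : ℕ) (κ : A.State → ℕ) :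
    ∀ (t : List α) (a : α) (p : A.State) (c : Fin (k + 1)),
      (((a :: t).foldl (pst A k κ) (p, c)).2 : ℕ) = min c.val (mcol A κ (A.step p a) t) := by
  intro t
  induction t with
  | nil => intro a p c; simp [pst, mcol]
  | cons b s ih =>
      intro a p c
      have h1 : ((a :: b :: s).foldl (pst A k κ) (p, c)) =
          ((b :: s).foldl (pst A k κ) (A.step p a,
            ⟨min c.val (κ (A.step p a)), lt_of_le_of_lt (min_le_left _ _) c.isLt⟩)) := rfl
      rw [h1, ih]
      simp [mcol, min_assoc]

private lemma foldl_mcol {α : Type} (A : DetAuto α) (k : ℕ) (κ : A.State → ℕ)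
    (p : A.State) (h : κ p < k + 1) (z : List α) :
    ((z.foldl (pst A k κ) (p, ⟨κ p, h⟩)).2 : ℕ) = mcol A κ p z := by
  cases z with
  | nil => simp [mcol]
  | cons a t => rw [foldl_snd]; simp [mcol]

private lemma main_iff {α : Type} [Inhabited α] (A : DetAuto α) (k : ℕ)
    (κ : A.State → ℕ) (hκhi : ∀ q, κ q ≤ k) (u v : List α) (hv : v ≠ []) :
    ((dpaToFdfa A k κ hκhi).Accept u v ↔ parityAccepts A κ (upWord u v)) := by
  have hv' : 0 < v.length := List.length_pos_iff.mpr hv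
  set i := A.normI u v with hidef
  set j := A.normJ u v with hjdef
  have hspec : 1 ≤ j ∧ A.eval (u ++ wpow v i) = A.eval (u ++ wpow v (i + j)) :=
    Nat.find_spec (A.normI_spec u v)
  set x := u ++ wpow v i with hxdef
  set y := wpow v j with hydef
  set w := upWord u v with hwdef
  set q₀ := A.eval x with hq0def
  set L := x.length with hLdef
  set P := y.length with hPdef
  have hLe : L = u.length + i * v.length := by
    rw [hLdef, hxdef, List.length_append, wpow_length]
  have hPe : P = j * v.length := by rw [hPdef, hydef, wpow_length]
  have hP1 : 1 ≤ P := by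
    rw [hPe]; exact Nat.le_of_lt_succ (by nlinarith [hspec.1, hv'])
  have hxy : x ++ y = u ++ wpow v (i + j) := by
    rw [hxdef, hydef, wpow_add, List.append_assoc]
  have heq : A.run q₀ y = q₀ := by
    have h1 : A.run q₀ y = A.eval (x ++ y) := by
      simp [DetAuto.eval, DetAuto.run, List.foldl_append, hq0def]
    rw [h1, hxy]
    exact hspec.2.symm
  have hpre : prefOf (x ++ y) w := by rw [hxy, hwdef]; exact upWord_pref u v hv (i + j)
  have hlen : (x ++ y).length = L + P := by rw [List.length_append]
  have hrun : ∀ m ≤ P, A.runSeq w (L + m) = A.run q₀ (y.take m) := by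
    intro m hm
    rw [runSeq_take A w (x ++ y) hpre (L + m) (by rw [hlen]; omega)]
    have h2 : (x ++ y).take (L + m) = x ++ y.take m := by
      rw [hLdef]; simp [List.take_append]
    rw [h2, DetAuto.run, List.foldl_append]
    rfl
  have hq0 : A.runSeq w L = q₀ := by
    have := hrun 0 (by omega)
    simpa [DetAuto.run] using this
  have hper1 : A.runSeq w (L + P) = q₀ := by
    rw [hrun P le_rfl, List.take_length]
    exact heq
  have hwper : ∀ m, w (L + m + P) = w (L + m) := by
    intro m
    rw [hwdef]
    unfold upWord
    rw [if_neg (by omega), if_neg (by omega)]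
    congr 1
    have e1 : L + m + P - u.length = m + (i + j) * v.length := by
      rw [hLe, hPe] at *; ring_nf; omega
    have e2 : L + m - u.length = m + i * v.length := by omega
    rw [e1, e2, Nat.add_mul_mod_self_right, Nat.add_mul_mod_self_right]
  have hperM : ∀ m, A.runSeq w (L + m + P) = A.runSeq w (L + m) := by
    intro m
    induction m with
    | zero => simpa using hper1.trans hq0.symm
    | succ m ih =>
        have e1 : L + (m + 1) + P = (L + m + P) + 1 := by omega
        have e2 : L + (m + 1) = (L + m) + 1 := rfl
        rw [e1, e2]
        show A.step (A.runSeq w (L + m + P)) (w (L + m + P))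
          = A.step (A.runSeq w (L + m)) (w (L + m))
        rw [ih, hwper m]
  have hperQ : ∀ (q m : ℕ), A.runSeq w (L + m + q * P) = A.runSeq w (L + m) := by
    intro q
    induction q with
    | zero => intro m; simp
    | succ q ih =>
        intro m
        have e : L + m + (q + 1) * P = L + (m + q * P) + P := by
          rw [Nat.succ_mul]; omega
        rw [e, hperM (m + q * P)]
        have e2 : L + (m + q * P) = L + m + q * P := by omega
        rw [e2]
        exact ih m
  set T := {c | {n | κ (A.runSeq w n) = c}.Infinite} with hTdef
  have hmemT : ∀ m, κ (A.runSeq w (L + m)) ∈ T := by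
    intro m
    refine Set.infinite_of_injective_forall_mem
      (f := fun q : ℕ => L + m + q * P) ?_ ?_
    · intro a b hab
      dsimp only at hab
      have hab' : a * P = b * P := by omega
      exact Nat.eq_of_mul_eq_mul_right hP1 hab'
    · intro a
      show κ (A.runSeq w (L + m + a * P)) = κ (A.runSeq w (L + m))
      rw [hperQ a m]
  have hleT : ∀ c ∈ T, ∃ m ≤ P, c = κ (A.runSeq w (L + m)) := by
    intro c hc
    obtain ⟨n, hn, hLn⟩ := Set.Infinite.exists_gt hc L
    refine ⟨(n - L) % P, le_of_lt (Nat.mod_lt _ (by omega)), ?_⟩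
    rw [← hperQ ((n - L) / P) ((n - L) % P)]
    have e : L + (n - L) % P + (n - L) / P * P = n := by
      have h2 : (n - L) % P + (n - L) / P * P = n - L := Nat.mod_add_div' _ _
      set r := (n - L) % P
      set d := (n - L) / P * P
      omega
    rw [e]
    exact hn.symm
  set M := mcol A κ q₀ y with hMdef
  have hMmem : M ∈ T := by
    obtain ⟨m, hm, hMv⟩ := mcol_exists A κ y q₀
    rw [hMdef, hMv, ← hrun m hm]
    exact hmemT m
  have hMle : ∀ c ∈ T, M ≤ c := by
    intro c hc
    obtain ⟨m, hm, rfl⟩ := hleT c hc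
    rw [hrun m hm]
    exact mcol_le A κ y q₀ m hm
  have hsInf : sInf T = M :=
    le_antisymm (Nat.sInf_le hMmem) (le_csInf ⟨M, hMmem⟩ hMle)
  have hAcc : (dpaToFdfa A k κ hκhi).Accept u v ↔ Odd M := by
    have h1 : (dpaToFdfa A k κ hκhi).Accept u v ↔
        Odd ((y.foldl (pst A k κ) (q₀, ⟨κ q₀, Nat.lt_succ_of_le (hκhi q₀)⟩)).2 : ℕ) :=
      Iff.rfl
    rw [h1, foldl_mcol]
  have hPar : parityAccepts A κ w ↔ Odd (sInf T) := Iff.rfl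
  rw [hAcc, hPar, hsInf]

/-- The FDFA built from a deterministic parity automaton `(A, κ)` with
colors in `[1..k]` accepts `(u,v)` iff `A` parity-accepts `u·v^ω`, and it is saturated. -/
theorem dpa_to_fdfa_correct {α : Type} [Inhabited α] (A : DetAuto α) (k : ℕ)
    (κ : A.State → ℕ) (hκlo : ∀ q, 1 ≤ κ q) (hκhi : ∀ q, κ q ≤ k) :
    (∀ u v : List α, v ≠ [] →
      ((dpaToFdfa A k κ hκhi).Accept u v ↔ parityAccepts A κ (upWord u v))) ∧
    (dpaToFdfa A k κ hκhi).Saturated := by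
  refine ⟨fun u v hv => main_iff A k κ hκhi u v hv, ?_⟩
  intro u v u' v' hv hv' hw
  rw [main_iff A k κ hκhi u v hv, main_iff A k κ hκhi u' v' hv', hw]
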